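/- Let C ⊆ ℝ^m be a strongly convex polyhedral cone — the set of all nonnegative linear combinations of finitely many fixed vectors, satisfying C ∩ (−C) = {0} — whose linear span has dimension at least 2. Then every element of C is the sum of two elements of the topological frontier ∂C of C in ℝ^m; consequently C is the smallest convex cone (hence the smallest polyhedral cone) containing ∂C. (Lemma 2.9) -/

import Mathlib

open scoped Pointwise in
private lemma cone_sum_mem {E : Type*} [AddCommMonoid E] {C : Set E} (h0 : (0:E) ∈ C)
    (hadd : ∀ x ∈ C, ∀ y ∈ C, x + y ∈ C) {ι : Type*} (t : Finset ι) (f : ι → E)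
    (hf : ∀ i ∈ t, f i ∈ C) : ∑ i ∈ t, f i ∈ C :=
  Finset.sum_induction f (· ∈ C) (fun a b ha hb => hadd a ha b hb) h0 hf

set_option maxHeartbeats 1600000 in
open scoped Pointwise in
/-- Lemma 2.9: a strongly convex polyhedral cone `C ⊆ ℝ^m` whose span has dimension at least `2`
satisfies: every element of `C` is the sum of two elements of the frontier `∂C`; consequently
`C` is the smallest convex cone containing `∂C`. -/
theorem stronglyConvex_polyhedralCone_frontier_generates
    (m k : ℕ) (v : Fin k → (Fin m → ℝ)) (C : Set (Fin m → ℝ))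
    (hC : C = {x | ∃ c : Fin k → ℝ, (∀ i, 0 ≤ c i) ∧ x = ∑ i, c i • v i})
    (hsc : C ∩ (-C) = {0})
    (hdim : 2 ≤ Module.finrank ℝ (Submodule.span ℝ C)) :
    (∀ x ∈ C, ∃ y ∈ frontier C, ∃ z ∈ frontier C, x = y + z) ∧
      ∀ D : ConvexCone ℝ (Fin m → ℝ), frontier C ⊆ ↑D → C ⊆ ↑D := by
  classical
  -- basic cone properties
  have hzero : (0:Fin m → ℝ) ∈ C := by
    rw [hC]; exact ⟨0, fun i => le_refl 0, by simp⟩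
  have hsmul : ∀ t : ℝ, 0 ≤ t → ∀ x ∈ C, t • x ∈ C := by
    rintro t ht x hx
    rw [hC] at hx ⊢
    obtain ⟨c, hc, rfl⟩ := hx
    exact ⟨fun i => t * c i, fun i => mul_nonneg ht (hc i),
      by rw [Finset.smul_sum]; simp [smul_smul]⟩
  have hadd : ∀ x ∈ C, ∀ y ∈ C, x + y ∈ C := by
    rintro x hx y hy
    rw [hC] at hx hy ⊢
    obtain ⟨c, hc, rfl⟩ := hx
    obtain ⟨c', hc', rfl⟩ := hy
    exact ⟨fun i => c i + c' i, fun i => add_nonneg (hc i) (hc' i),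
      by rw [← Finset.sum_add_distrib]; simp [add_smul]⟩
  have hconv : Convex ℝ C := fun x hx y hy a b ha hb _ =>
    hadd _ (hsmul a ha x hx) _ (hsmul b hb y hy)
  have hptd : ∀ x ∈ C, -x ∈ C → x = 0 := by
    intro x hx hnx
    have : x ∈ C ∩ (-C) := ⟨hx, by simpa using hnx⟩
    rw [hsc] at this
    simpa using this
  -- a nonzero element of C
  have hne : ∃ w ∈ C, w ≠ 0 := by
    by_contra h
    push_neg at h
    have : C = {0} := Set.eq_singleton_iff_unique_mem.2 ⟨hzero, fun x hx => h x hx⟩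
    rw [this, Submodule.span_zero_singleton] at hdim
    simp at hdim
  -- C is closed
  have hclosed : IsClosed C := by
    obtain ⟨w, hw, hw0⟩ := hne
    have hvne : ∃ i, v i ≠ 0 := by
      by_contra h
      push_neg at h
      rw [hC] at hw
      obtain ⟨c, -, rfl⟩ := hw
      exact hw0 (by simp [h])
    set T : Finset (Fin m → ℝ) := (Finset.univ.filter (fun i => v i ≠ 0)).image v with hT
    set K : Set (Fin m → ℝ) := convexHull ℝ (T : Set (Fin m → ℝ)) with hK
    have hTC : (T : Set (Fin m → ℝ)) ⊆ C := by
      intro y hy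
      simp only [hT, Finset.coe_image, Set.mem_image, Finset.mem_coe,
        Finset.mem_filter, Finset.mem_univ, true_and] at hy
      obtain ⟨i, -, rfl⟩ := hy
      rw [hC]
      exact ⟨fun j => if j = i then 1 else 0,
        fun j => by by_cases h : j = i <;> simp [h], by simp⟩
    have hKC : K ⊆ C := convexHull_min hTC hconv
    have hKcpt : IsCompact K := T.finite_toSet.isCompact_convexHull ℝ
    have hTne : ∀ y ∈ T, y ≠ 0 := by
      intro y hy
      simp only [hT, Finset.mem_image, Finset.mem_filter, Finset.mem_univ, true_and] at hy
      obtain ⟨i, hi, rfl⟩ := hy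
      exact hi
    have h0K : (0 : Fin m → ℝ) ∉ K := by
      intro h0
      rw [hK, Finset.convexHull_eq] at h0
      obtain ⟨wt, hwt0, hwt1, hcm⟩ := h0
      rw [Finset.centerMass_eq_of_sum_1 _ _ hwt1] at hcm
      simp only [id] at hcm
      have hj : ∃ j ∈ T, wt j ≠ 0 := by
        by_contra h
        push_neg at h
        rw [Finset.sum_eq_zero h] at hwt1
        norm_num at hwt1
      obtain ⟨j, hjT, hwj⟩ := hj
      have h1 : wt j • j ∈ C := hsmul _ (hwt0 j hjT) j (hTC hjT)
      have h2 : -(wt j • j) ∈ C := by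
        have h3 : ∑ y ∈ T.erase j, wt y • y ∈ C :=
          cone_sum_mem hzero hadd _ _ (fun y hy =>
            hsmul _ (hwt0 y (Finset.mem_of_mem_erase hy)) y
              (hTC (Finset.mem_of_mem_erase hy)))
        have heq : wt j • j + ∑ y ∈ T.erase j, wt y • y = 0 := by
          rw [← hcm]; exact Finset.add_sum_erase T (fun y => wt y • y) hjT
        rw [neg_eq_of_add_eq_zero_right heq]
        exact h3
      have := hptd _ h1 h2
      rcases smul_eq_zero.1 this with h | h
      · exact hwj h
      · exact hTne j hjT h
    have hKne : K.Nonempty := by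
      obtain ⟨i, hi⟩ := hvne
      exact ⟨v i, subset_convexHull ℝ _ (by
        simp only [hT, Finset.coe_image, Set.mem_image, Finset.mem_coe,
          Finset.mem_filter, Finset.mem_univ, true_and]
        exact ⟨i, hi, rfl⟩)⟩
    have hrep : C = {x | ∃ s : ℝ, 0 ≤ s ∧ ∃ y ∈ K, x = s • y} := by
      ext x
      constructor
      · intro hx
        rw [hC] at hx
        obtain ⟨c, hc, rfl⟩ := hx
        set S : Finset (Fin k) := Finset.univ.filter (fun i => v i ≠ 0) with hS
        have hx' : ∑ i ∈ S, c i • v i = ∑ i, c i • v i := by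
          refine Finset.sum_filter_of_ne (fun i _ h => ?_)
          intro hvi
          exact h (by rw [hvi, smul_zero])
        rcases eq_or_lt_of_le (Finset.sum_nonneg (fun i _ => hc i) : 0 ≤ ∑ i ∈ S, c i)
          with hs | hs
        · have hz : ∀ i ∈ S, c i = 0 :=
            (Finset.sum_eq_zero_iff_of_nonneg (fun i _ => hc i)).1 hs.symm
          have : ∑ i, c i • v i = 0 := by
            rw [← hx']
            exact Finset.sum_eq_zero (fun i hi => by rw [hz i hi, zero_smul])
          exact ⟨0, le_refl 0, hKne.choose, hKne.choose_spec, by rw [this, zero_smul]⟩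
        · refine ⟨∑ i ∈ S, c i, hs.le, S.centerMass c v, ?_, ?_⟩
          · refine Finset.centerMass_mem_convexHull _ (fun i hi => hc i) hs (fun i hi => ?_)
            simp only [hT, Finset.coe_image, Set.mem_image, Finset.mem_coe]
            exact ⟨i, hi, rfl⟩
          · rw [Finset.centerMass, smul_smul, mul_inv_cancel₀ hs.ne', one_smul, hx']
      · rintro ⟨s, hs, y, hyK, rfl⟩
        exact hsmul s hs y (hKC hyK)
    rw [hrep]
    refine IsSeqClosed.isClosed ?_
    intro u x hu hux
    obtain ⟨y₀, hy₀K, hy₀min'⟩ := hKcpt.exists_isMinOn hKne continuous_norm.continuousOn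
    have hδ : 0 < ‖y₀‖ := norm_pos_iff.2 (fun h => h0K (h ▸ hy₀K))
    have hy₀min : ∀ z ∈ K, ‖y₀‖ ≤ ‖z‖ := fun z hz => hy₀min' hz
    choose s hs y hyK hxy using hu
    obtain ⟨M, hM⟩ : ∃ M, ∀ n, ‖u n‖ ≤ M := by
      obtain ⟨M, hM⟩ := (hux.norm : Filter.Tendsto (fun n => ‖u n‖)
        Filter.atTop (nhds ‖x‖)).bddAbove_range
      exact ⟨M, fun n => hM (Set.mem_range_self n)⟩
    have hsb : ∀ n, s n ≤ M / ‖y₀‖ := by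
      intro n
      have h1 : s n * ‖y₀‖ ≤ ‖u n‖ := by
        rw [hxy n, norm_smul, Real.norm_eq_abs, abs_of_nonneg (hs n)]
        exact mul_le_mul_of_nonneg_left (hy₀min (y n) (hyK n)) (hs n)
      rw [le_div_iff₀ hδ]
      exact h1.trans (hM n)
    have hcpt : IsCompact ((Set.Icc (0:ℝ) (M / ‖y₀‖)) ×ˢ K) := isCompact_Icc.prod hKcpt
    have hmem : ∀ n, ((s n, y n) : ℝ × (Fin m → ℝ)) ∈ (Set.Icc (0:ℝ) (M / ‖y₀‖)) ×ˢ K :=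
      fun n => ⟨⟨hs n, hsb n⟩, hyK n⟩
    obtain ⟨⟨s₀, z₀⟩, hmem₀, φ, hφ, hlim⟩ := hcpt.tendsto_subseq hmem
    have hs₀ : Filter.Tendsto (fun n => s (φ n)) Filter.atTop (nhds s₀) :=
      (continuous_fst.tendsto _).comp hlim
    have hz₀ : Filter.Tendsto (fun n => y (φ n)) Filter.atTop (nhds z₀) :=
      (continuous_snd.tendsto _).comp hlim
    have h1 : Filter.Tendsto (fun n => u (φ n)) Filter.atTop (nhds (s₀ • z₀)) :=
      (hs₀.smul hz₀).congr (fun n => (hxy (φ n)).symm)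
    have h2 : Filter.Tendsto (fun n => u (φ n)) Filter.atTop (nhds x) :=
      hux.comp hφ.tendsto_atTop
    exact ⟨s₀, hmem₀.1.1, z₀, hmem₀.2, tendsto_nhds_unique h2 h1⟩
  -- 0 is on the frontier
  have h0f : (0:Fin m → ℝ) ∈ frontier C := by
    rw [frontier, Set.mem_diff]
    refine ⟨subset_closure hzero, fun h0int => ?_⟩
    obtain ⟨w, hw, hw0⟩ := hne
    rw [mem_interior_iff_mem_nhds, Metric.mem_nhds_iff] at h0int
    obtain ⟨ε, hε, hball⟩ := h0int
    have hwn : 0 < ‖w‖ := norm_pos_iff.2 hw0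
    set δ : ℝ := ε / (2 * ‖w‖) with hδdef
    have hδ : 0 < δ := by positivity
    have h2 : (-δ) • w ∈ C := by
      apply hball
      rw [Metric.mem_ball, dist_zero_right, norm_smul, Real.norm_eq_abs, abs_neg,
        abs_of_pos hδ]
      have hcalc : δ * ‖w‖ = ε / 2 := by rw [hδdef]; field_simp
      linarith
    have hnw : -w ∈ C := by
      have h3 := hsmul δ⁻¹ (inv_nonneg.2 hδ.le) _ h2
      rwa [smul_smul, inv_mul_eq_div, neg_div, div_self hδ.ne', neg_one_smul] at h3
    exact hw0 (hptd w hw hnw)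
  by_cases hspan : Submodule.span ℝ C = ⊤
  · -- full-dimensional case
    have hm2 : 2 ≤ m := by
      have h1 := Submodule.finrank_le (Submodule.span ℝ C)
      have h2 : Module.finrank ℝ (Fin m → ℝ) = m := Module.finrank_fin_fun ℝ
      omega
    have hrank : 1 < Module.rank ℝ (Fin m → ℝ) := by
      rw [rank_fin_fun]
      exact_mod_cast Nat.lt_of_lt_of_le one_lt_two hm2
    obtain ⟨w, hw, hw0⟩ := hne
    have hnwC : -w ∉ C := fun h => hw0 (hptd w hw h)
    obtain ⟨d, hd, hd'⟩ : ∃ d : Fin m → ℝ, d ∉ C ∧ -d ∉ C := by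
      by_contra h
      push_neg at h
      have hpc := (isPathConnected_compl_singleton_of_one_lt_rank hrank
        (0 : Fin m → ℝ)).isConnected.isPreconnected
      have hUo : IsOpen Cᶜ := hclosed.isOpen_compl
      have hVo : IsOpen (-C)ᶜ := hclosed.neg.isOpen_compl
      have hsub : ({(0:Fin m → ℝ)}ᶜ : Set (Fin m → ℝ)) ⊆ Cᶜ ∪ (-C)ᶜ := by
        intro x hx
        by_contra hx'
        simp only [Set.mem_union, Set.mem_compl_iff, not_or, not_not] at hx'
        exact hx (hptd x hx'.1 (Set.mem_neg.1 hx'.2))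
      have hU : (({(0:Fin m → ℝ)}ᶜ : Set (Fin m → ℝ)) ∩ Cᶜ).Nonempty :=
        ⟨-w, Set.mem_compl_singleton_iff.2 (neg_ne_zero.2 hw0), hnwC⟩
      have hV : (({(0:Fin m → ℝ)}ᶜ : Set (Fin m → ℝ)) ∩ (-C)ᶜ).Nonempty :=
        ⟨w, Set.mem_compl_singleton_iff.2 hw0, fun hmem => hnwC (Set.mem_neg.1 hmem)⟩
      obtain ⟨x, hx0, hxU, hxV⟩ := hpc _ _ hUo hVo hsub hU hV
      exact hxV (Set.mem_neg.2 (h x hxU))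
    have hd0 : d ≠ 0 := fun h => hd (h ▸ hzero)
    have hdn : 0 < ‖d‖ := norm_pos_iff.2 hd0
    have hfr_smul : ∀ c : ℝ, 0 < c → ∀ y ∈ frontier C, c • y ∈ frontier C := by
      intro c hc y hy
      rw [frontier, Set.mem_diff] at hy ⊢
      obtain ⟨hy1, hy2⟩ := hy
      refine ⟨subset_closure (hsmul c hc.le y (by rwa [hclosed.closure_eq] at hy1)), ?_⟩
      intro hint
      apply hy2
      have hopen : IsOpen (c⁻¹ • interior C) := isOpen_interior.smul₀ (inv_ne_zero hc.ne')
      have hsubC : c⁻¹ • interior C ⊆ C := by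
        rintro - ⟨z, hz, rfl⟩
        exact hsmul _ (inv_nonneg.2 hc.le) z (interior_subset hz)
      have hmemy : y ∈ c⁻¹ • interior C :=
        ⟨c • y, hint, by show c⁻¹ • (c • y) = y; rw [smul_smul, inv_mul_cancel₀ hc.ne', one_smul]⟩
      exact interior_maximal hsubC hopen hmemy
    have hdecomp : ∀ x ∈ C, ∃ y ∈ frontier C, ∃ z ∈ frontier C, x = y + z := by
      intro x hx
      by_cases hxint : x ∈ interior C
      · set T : Set ℝ := {t : ℝ | x + t • d ∈ C} with hTdef
        have haux : ∀ e : Fin m → ℝ, e ∉ C → BddAbove {t : ℝ | x + t • e ∈ C} := by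
          intro e he
          by_contra hbdd
          rw [not_bddAbove_iff] at hbdd
          have hch : ∀ n : ℕ, ∃ t : ℝ, (x + t • e ∈ C) ∧ (n:ℝ) < t := by
            intro n
            obtain ⟨t, ht, htn⟩ := hbdd (n:ℝ)
            exact ⟨t, ht, htn⟩
          choose t ht htn using hch
          have htpos : ∀ n, (0:ℝ) < t n := fun n =>
            lt_of_le_of_lt (Nat.cast_nonneg n) (htn n)
          have hmemC : ∀ n, (t n)⁻¹ • x + e ∈ C := by
            intro n
            have h5 := hsmul (t n)⁻¹ (inv_nonneg.2 (htpos n).le) _ (ht n)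
            rwa [smul_add, smul_smul, inv_mul_cancel₀ (htpos n).ne', one_smul] at h5
          have htends : Filter.Tendsto (fun n => (t n)⁻¹ • x + e) Filter.atTop (nhds e) := by
            have h1 : Filter.Tendsto t Filter.atTop Filter.atTop :=
              Filter.tendsto_atTop_mono (fun n => (htn n).le) tendsto_natCast_atTop_atTop
            have h2 : Filter.Tendsto (fun n => (t n)⁻¹) Filter.atTop (nhds 0) :=
              h1.inv_tendsto_atTop
            have h3 := h2.smul_const x
            rw [zero_smul] at h3
            simpa using h3.add_const e
          exact he (hclosed.closure_eq ▸
            mem_closure_of_tendsto htends (Filter.Eventually.of_forall hmemC))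
        have hbddA : BddAbove T := haux d hd
        have hbddB : BddBelow T := by
          have h1 : BddAbove {t : ℝ | x + t • (-d) ∈ C} := haux (-d) hd'
          have h2 : T = -{t : ℝ | x + t • (-d) ∈ C} := by
            ext t
            simp only [hTdef, Set.mem_neg, Set.mem_setOf_eq, smul_neg, neg_smul, neg_neg]
          rw [h2]
          exact bddBelow_neg.2 h1
        rw [mem_interior_iff_mem_nhds, Metric.mem_nhds_iff] at hxint
        obtain ⟨ε, hε, hball⟩ := hxint
        set η : ℝ := ε / (2 * ‖d‖) with hηdef
        have hη : 0 < η := by positivity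
        have hmemball : ∀ s : ℝ, |s| = η → x + s • d ∈ C := by
          intro s hs
          apply hball
          rw [Metric.mem_ball, dist_eq_norm, add_sub_cancel_left, norm_smul,
            Real.norm_eq_abs, hs]
          have hcalc : η * ‖d‖ = ε / 2 := by rw [hηdef]; field_simp
          linarith
        have hbT : η ∈ T := hmemball η (abs_of_pos hη)
        have haT : -η ∈ T := hmemball (-η) (by rw [abs_neg, abs_of_pos hη])
        have hTne : T.Nonempty := ⟨η, hbT⟩
        have hTclosed : IsClosed T := by
          have h6 : T = (fun t : ℝ => x + t • d) ⁻¹' C := rfl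
          rw [h6]
          exact hclosed.preimage (continuous_const.add (continuous_id.smul continuous_const))
        set b := sSup T with hbdef
        set a := sInf T with hadef
        have hbmem : b ∈ T := hTclosed.csSup_mem hTne hbddA
        have hamem : a ∈ T := hTclosed.csInf_mem hTne hbddB
        have hbpos : 0 < b := lt_of_lt_of_le hη (le_csSup hbddA hbT)
        have haneg : a < 0 := lt_of_le_of_lt (csInf_le hbddB haT) (by linarith)
        have hble : ∀ t ∈ T, t ≤ b := fun t ht => le_csSup hbddA ht
        have hale : ∀ t ∈ T, a ≤ t := fun t ht => csInf_le hbddB ht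
        have hpfr : x + b • d ∈ frontier C := by
          rw [frontier, Set.mem_diff]
          refine ⟨subset_closure hbmem, fun hint => ?_⟩
          rw [mem_interior_iff_mem_nhds, Metric.mem_nhds_iff] at hint
          obtain ⟨ρ, hρ, hballρ⟩ := hint
          have hpos : 0 < ρ/(2*‖d‖) := by positivity
          have hmem2 : x + (b + ρ/(2*‖d‖)) • d ∈ C := by
            apply hballρ
            rw [Metric.mem_ball, dist_eq_norm]
            have h7 : x + (b + ρ/(2*‖d‖)) • d - (x + b • d) = (ρ/(2*‖d‖)) • d := by
              rw [add_smul]; abel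
            rw [h7, norm_smul, Real.norm_eq_abs, abs_of_pos hpos]
            have hcalc : ρ/(2*‖d‖) * ‖d‖ = ρ / 2 := by field_simp
            linarith
          have h8 := hble _ hmem2
          linarith
        have hqfr : x + a • d ∈ frontier C := by
          rw [frontier, Set.mem_diff]
          refine ⟨subset_closure hamem, fun hint => ?_⟩
          rw [mem_interior_iff_mem_nhds, Metric.mem_nhds_iff] at hint
          obtain ⟨ρ, hρ, hballρ⟩ := hint
          have hpos : 0 < ρ/(2*‖d‖) := by positivity
          have hmem2 : x + (a - ρ/(2*‖d‖)) • d ∈ C := by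
            apply hballρ
            rw [Metric.mem_ball, dist_eq_norm]
            have h7 : x + (a - ρ/(2*‖d‖)) • d - (x + a • d) = (-(ρ/(2*‖d‖))) • d := by
              rw [sub_smul, neg_smul]; abel
            rw [h7, norm_smul, Real.norm_eq_abs, abs_neg, abs_of_pos hpos]
            have hcalc : ρ/(2*‖d‖) * ‖d‖ = ρ / 2 := by field_simp
            linarith
          have h8 := hale _ hmem2
          linarith
        clear_value b a
        set lam : ℝ := -a / (b - a) with hlam
        have hba : 0 < b - a := by linarith
        have hlam0 : 0 < lam := div_pos (by linarith) hba
        have hlam1 : lam < 1 := by rw [hlam, div_lt_one hba]; linarith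
        refine ⟨lam • (x + b • d), hfr_smul lam hlam0 _ hpfr,
          (1 - lam) • (x + a • d), hfr_smul (1 - lam) (by linarith) _ hqfr, ?_⟩
        have hba' : b - a ≠ 0 := ne_of_gt hba
        have h10 : lam * (b - a) = -a := by rw [hlam, div_mul_cancel₀ _ hba']
        have hkey : lam * b + (1 - lam) * a = 0 := by linear_combination h10
        clear_value lam
        have h9 : lam • (x + b • d) + (1 - lam) • (x + a • d)
            = (lam + (1 - lam)) • x + (lam * b + (1 - lam) * a) • d := by
          rw [smul_add, smul_add, smul_smul, smul_smul, add_smul, add_smul]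
          abel
        rw [h9, hkey, zero_smul, add_zero, show lam + (1 - lam) = (1:ℝ) by ring, one_smul]
      · exact ⟨x, (by rw [frontier, Set.mem_diff]; exact ⟨subset_closure hx, hxint⟩),
          0, h0f, (add_zero x).symm⟩
    refine ⟨hdecomp, fun D hD x hx => ?_⟩
    obtain ⟨y, hy, z, hz, hxyz⟩ := hdecomp x hx
    rw [hxyz]
    exact D.add_mem (hD hy) (hD hz)
  · -- lower-dimensional case: interior is empty, frontier ⊇ C
    have hint : interior C = ∅ := by
      by_contra h
      apply hspan
      have h1 : (interior ((Submodule.span ℝ C : Submodule ℝ (Fin m → ℝ)) : Set (Fin m → ℝ))).Nonempty := by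
        refine (Set.nonempty_iff_ne_empty.2 h).mono (interior_mono Submodule.subset_span)
      exact Submodule.eq_top_of_nonempty_interior' _ h1
    have hfr : C ⊆ frontier C := by
      intro x hx
      rw [frontier, hint, Set.diff_empty]
      exact subset_closure hx
    refine ⟨fun x hx => ⟨x, hfr hx, 0, hfr hzero, (add_zero x).symm⟩,
      fun D hD x hx => hD (hfr hx)⟩
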